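/- Let f(x,y) = (x+α, y+x+β) be the linear skew-shift of T² with α irrational, and fix m ∈ ℤ, n ∈ ℤ∖{0} and s > 1/2. Then the functional D_{(m,n)} is f-invariant: for every Ψ ∈ W^s(H_{(m,n)}) one has D_{(m,n)}(Ψ∘f) = D_{(m,n)}(Ψ). Consequently, if Φ ∈ W^s(H_{(m,n)}) is a coboundary, i.e. Φ = u∘f − u for some u ∈ W^s(H_{(m,n)}), then D_{(m,n)}(Φ) = 0. -/

import Mathlib

open MeasureTheory Filter

noncomputable section

abbrev T1 : Type := UnitAddCircle
abbrev T2 : Type := UnitAddCircle × UnitAddCircle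

/-- The linear skew-shift `f(x,y) = (x+α, y+x+β)` on the two-torus. -/
def skew (α β : ℝ) : T2 → T2 := fun p => (p.1 + (α : T1), p.2 + p.1 + (β : T1))

/-- Birkhoff sums `ψ_n = ∑_{k<n} ψ ∘ f^k`. -/
def birkhoff {X : Type*} (f : X → X) (ψ : X → ℝ) (n : ℕ) (p : X) : ℝ :=
  ∑ k ∈ Finset.range n, ψ (f^[k] p)

/-- Fiber average `φ^⊥(x) = ∫_T Φ(x,s) ds`. -/
def fiberAvg (Φ : T2 → ℝ) : T1 → ℝ := fun x => ∫ s : T1, Φ (x, s)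

/-- Fiber projection `φ(x,y) = Φ(x,y) - ∫_T Φ(x,s) ds`. -/
def fiberProj (Φ : T2 → ℝ) : T2 → ℝ := fun p => Φ p - ∫ s : T1, Φ (p.1, s)

/-- `ψ` is a measurable coboundary for `f`: `ψ = u∘f - u` a.e. for some measurable `u`. -/
def MeasCobound (f : T2 → T2) (ψ : T2 → ℝ) : Prop :=
  ∃ u : T2 → ℝ, Measurable u ∧ ∀ᵐ p : T2, ψ p = u (f p) - u p

/-- `g` is (real-valued and) a trigonometric polynomial of degree at most `d` on the circle. -/
def IsTrigPolyDeg (d : ℕ) (g : T1 → ℝ) : Prop :=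
  ∃ c : ℤ → ℂ, ∀ y : T1, (g y : ℂ) = ∑ k ∈ Finset.Icc (-(d : ℤ)) d, c k * fourier k y

/-- The class `P_d`: continuous functions, trigonometric polynomials of degree `≤ d` in `y`. -/
def InPd (d : ℕ) (Φ : T2 → ℝ) : Prop :=
  Continuous Φ ∧ ∀ x : T1, IsTrigPolyDeg d fun y => Φ (x, y)

/-- The class `R` of roof functions: `Φ ∈ P_d` for some `d ≥ 1` and `φ^⊥` is a
trigonometric polynomial. -/
def InR (Φ : T2 → ℝ) : Prop :=
  (∃ d : ℕ, 1 ≤ d ∧ InPd d Φ) ∧ ∃ d' : ℕ, IsTrigPolyDeg d' (fiberAvg Φ)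

/-- The hitting number `n_t(p) = max { n : Φ_n(p) < t }`. -/
def hitting (f : T2 → T2) (Φ : T2 → ℝ) (t : ℝ) (p : T2) : ℕ :=
  sSup {n : ℕ | birkhoff f Φ n p < t}

/-- The character `e_{a,b}(x,y) = exp(2πi(ax+by))` on the two-torus. -/
def eab (a b : ℤ) (p : T2) : ℂ := fourier a p.1 * fourier b p.2

/-- The phase `θ_j = (αm+βn)j + αn·j(j−1)/2`. -/
def theta (α β : ℝ) (m n j : ℤ) : ℝ :=
  (α * m + β * n) * j + α * n * ((j : ℝ) * ((j : ℝ) - 1) / 2)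

/-- The invariant distribution `D_{(m,n)}` evaluated on a coefficient sequence:
`D_{(m,n)}(Φ) = ∑_j Φ_j exp(−2πi θ_j)`. -/
def Dmn (α β : ℝ) (m n : ℤ) (c : ℤ → ℂ) : ℂ :=
  ∑' j : ℤ, c j * Complex.exp (-(2 * Real.pi * Complex.I * (theta α β m n j : ℝ)))

/-- The Sobolev weight `(1+(m+jn)²+n²)^s`. -/
def wt (m n : ℤ) (s : ℝ) (j : ℤ) : ℝ :=
  (1 + ((m + j * n : ℤ) : ℝ) ^ 2 + (n : ℝ) ^ 2) ^ s

/-- The coefficient sequence `c` belongs to `W^s(H_{(m,n)})`. -/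
def SobSeq (m n : ℤ) (s : ℝ) (c : ℤ → ℂ) : Prop :=
  Summable fun j : ℤ => wt m n s j * ‖c j‖ ^ 2

/-- The Sobolev norm `‖·‖_s` on `H_{(m,n)}`, computed from coefficients. -/
def sobNorm (m n : ℤ) (s : ℝ) (c : ℤ → ℂ) : ℝ :=
  Real.sqrt (∑' j : ℤ, wt m n s j * ‖c j‖ ^ 2)

/-- The function `∑_j c_j e_{m+jn,n}` of `H_{(m,n)}` with coefficients `c`. -/
def funOf (m n : ℤ) (c : ℤ → ℂ) : T2 → ℂ := fun p => ∑' j : ℤ, c j * eab (m + j * n) n p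



open AddCircle in
lemma my_summable_aux_nat (s : ℝ) (hs : 1/2 < s) :
    Summable fun k : ℕ => ((1:ℝ) + (k:ℝ)^2)^(-s) := by
  have h2 : Summable fun k : ℕ => ((k:ℝ)+1)^(-(2*s)) := by
    have := (Real.summable_nat_rpow (p := -(2*s))).mpr (by linarith)
    have := (summable_nat_add_iff (f := fun n : ℕ => (n:ℝ)^(-(2*s))) 1).mpr this
    convert this using 2 with k
    · rfl
    push_cast; ring_nf
  apply Summable.of_nonneg_of_le (fun k => Real.rpow_nonneg (by positivity) _)
    (fun k => ?_) (h2.mul_left ((2:ℝ)^s))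
  have h1 : ((((k:ℝ)+1)^2)/2) ≤ 1 + (k:ℝ)^2 := by nlinarith [sq_nonneg ((k:ℝ)-1)]
  have h0 : (0:ℝ) < (((k:ℝ)+1)^2)/2 := by positivity
  calc ((1:ℝ) + (k:ℝ)^2)^(-s) ≤ ((((k:ℝ)+1)^2)/2)^(-s) :=
        Real.rpow_le_rpow_of_nonpos h0 h1 (by linarith)
    _ = (2:ℝ)^s * ((k:ℝ)+1)^(-(2*s)) := by
        rw [Real.div_rpow (by positivity) (by norm_num),
          Real.rpow_neg (by norm_num : (0:ℝ) ≤ 2), div_inv_eq_mul, mul_comm]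
        congr 1
        rw [← Real.rpow_natCast ((k:ℝ)+1) 2, ← Real.rpow_mul (by positivity)]
        norm_num

lemma my_summable_wt_inv (m n : ℤ) (hn : n ≠ 0) (s : ℝ) (hs : 1/2 < s) :
    Summable fun j : ℤ => (wt m n s j)⁻¹ := by
  have hint : Summable fun k : ℤ => ((1:ℝ) + (k:ℝ)^2)^(-s) := by
    apply Summable.of_nat_of_neg
    · exact_mod_cast my_summable_aux_nat s hs
    · convert my_summable_aux_nat s hs using 2 with k; rfl; push_cast; ring_nf
  have hcomp : Summable fun j : ℤ => ((1:ℝ) + ((m + j*n : ℤ):ℝ)^2)^(-s) := by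
    have hinj : Function.Injective (fun j : ℤ => m + j * n) := by
      intro a b hab; simp only at hab
      exact mul_right_cancel₀ hn (by omega)
    exact hint.comp_injective hinj
  apply Summable.of_nonneg_of_le
    (fun j => inv_nonneg.mpr (Real.rpow_nonneg (by positivity) s)) (fun j => ?_) hcomp
  rw [Real.rpow_neg (by positivity : (0:ℝ) ≤ 1 + ((m + j*n : ℤ):ℝ)^2)]
  apply inv_anti₀
  · exact Real.rpow_pos_of_pos (by positivity) s
  · exact Real.rpow_le_rpow (by positivity) (by nlinarith [sq_nonneg ((n:ℝ))]) (by linarith)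

lemma my_sob_summable_norm {m n : ℤ} (hn : n ≠ 0) {s : ℝ} (hs : 1/2 < s) {c : ℤ → ℂ}
    (h : SobSeq m n s c) : Summable fun j : ℤ => ‖c j‖ := by
  apply Summable.of_nonneg_of_le (fun j => norm_nonneg _) (fun j => ?_)
    (((h.add (my_summable_wt_inv m n hn s hs)).mul_left (1/2)))
  have hw : 0 < wt m n s j := Real.rpow_pos_of_pos (by positivity) s
  have hinv : wt m n s j * (wt m n s j)⁻¹ = 1 := mul_inv_cancel₀ hw.ne'
  nlinarith [sq_nonneg (wt m n s j * ‖c j‖ - 1), hw, norm_nonneg (c j), mul_pos hw hw]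

lemma my_norm_fourier (n : ℤ) (x : T1) : ‖(fourier n x : ℂ)‖ = 1 := by
  simp [fourier_apply, Circle.norm_coe]

open AddCircle in
lemma my_fourierCoeff_fourier (k j : ℤ) :
    fourierCoeff (T := 1) (⇑(fourier k)) j = if j = k then 1 else 0 := by
  unfold fourierCoeff
  simp_rw [smul_eq_mul, ← fourier_add]
  split_ifs with h
  · subst h
    simp_rw [neg_add_cancel]
    have : ⇑(fourier (T := 1) 0) = (fun _ => 1 : AddCircle (1:ℝ) → ℂ) := by ext1; exact fourier_zero
    rw [this, integral_const, probReal_univ, one_smul]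
  · have hij : -j + k ≠ 0 := by omega
    exact integral_eq_zero_of_add_right_eq_neg (μ := haarAddCircle)
      (fourier_add_half_inv_index hij one_pos)

open AddCircle in
lemma my_fourierCoeff_tsum (c : ℤ → ℂ) (g : ℤ → ℤ) (hc : Summable fun j => ‖c j‖) (i : ℤ) :
    fourierCoeff (T := 1) (fun x => ∑' j, c j * fourier (g j) x) i
      = ∑' j, c j * fourierCoeff (T := 1) (⇑(fourier (g j))) i := by
  have h1 : ∀ j : ℤ, Integrable (fun x : AddCircle (1:ℝ) =>
      fourier (-i) x * (c j * fourier (g j) x)) haarAddCircle := fun j =>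
    (((fourier (-i)).continuous).mul (continuous_const.mul
      (fourier (g j)).continuous)).integrable_of_hasCompactSupport
      (HasCompactSupport.of_compactSpace _)
  have h2 : Summable fun j : ℤ =>
      ∫ x : AddCircle (1:ℝ), ‖fourier (-i) x * (c j * fourier (g j) x)‖ ∂haarAddCircle := by
    have : ∀ j : ℤ, (∫ x : AddCircle (1:ℝ),
        ‖fourier (-i) x * (c j * fourier (g j) x)‖ ∂haarAddCircle) = ‖c j‖ := by
      intro j
      have : (fun x : AddCircle (1:ℝ) => ‖fourier (-i) x * (c j * fourier (g j) x)‖)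
          = fun _ => ‖c j‖ := by
        funext x; simp [my_norm_fourier, Circle.norm_coe]
      rw [this, integral_const, probReal_univ, one_smul]
    simpa only [this] using hc
  calc fourierCoeff (T := 1) (fun x => ∑' j, c j * fourier (g j) x) i
      = ∫ x : AddCircle (1:ℝ), ∑' j, fourier (-i) x * (c j * fourier (g j) x) ∂haarAddCircle := by
        unfold fourierCoeff
        congr 1; funext x; rw [smul_eq_mul, tsum_mul_left]
    _ = ∑' j, ∫ x : AddCircle (1:ℝ), fourier (-i) x * (c j * fourier (g j) x) ∂haarAddCircle :=
        (integral_tsum_of_summable_integral_norm h1 h2).symm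
    _ = ∑' j, c j * fourierCoeff (T := 1) (⇑(fourier (g j))) i := by
        congr 1; funext j
        unfold fourierCoeff
        simp_rw [smul_eq_mul, mul_left_comm (fourier (-i) _) (c j)]
        rw [MeasureTheory.integral_const_mul]

lemma my_coeff_ext (m n : ℤ) (hn : n ≠ 0) {c d : ℤ → ℂ}
    (hc : Summable fun j => ‖c j‖) (hd : Summable fun j => ‖d j‖)
    (h : ∀ x : AddCircle (1:ℝ),
      ∑' j, c j * fourier (m + j*n) x = ∑' j, d j * fourier (m + j*n) x) : c = d := by
  have key : ∀ (e : ℤ → ℂ), (Summable fun j => ‖e j‖) → ∀ j0 : ℤ,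
      fourierCoeff (T := 1) (fun x => ∑' j, e j * fourier (m + j*n) x) (m + j0*n) = e j0 := by
    intro e he j0
    rw [my_fourierCoeff_tsum e _ he]
    rw [tsum_eq_single j0 ?_]
    · rw [my_fourierCoeff_fourier, if_pos rfl, mul_one]
    · intro b hb
      rw [my_fourierCoeff_fourier, if_neg, mul_zero]
      intro hcontra
      exact hb (mul_right_cancel₀ hn (by omega))
  funext j0
  rw [← key c hc j0, ← key d hd j0]
  congr 1
  funext x
  exact h x

/-- The multiplier `λ_j = e^{2πi((m+jn)α+nβ)}`. -/
def lam (α β : ℝ) (m n j : ℤ) : ℂ := fourier (m + j*n) ((α : ℝ) : T1) * fourier n ((β : ℝ) : T1)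

lemma my_fourier_pt_add (n : ℤ) (x y : T1) : fourier n (x + y) = fourier n x * fourier n y := by
  simp [fourier_apply, smul_add, AddCircle.toCircle_add]

lemma my_norm_lam (α β : ℝ) (m n j : ℤ) : ‖lam α β m n j‖ = 1 := by
  rw [lam, norm_mul, my_norm_fourier, my_norm_fourier, mul_one]

lemma my_phase (α β : ℝ) (m n j : ℤ) :
    Complex.exp (-(2 * Real.pi * Complex.I * ((theta α β m n (j+1) : ℝ) : ℂ))) * lam α β m n j
      = Complex.exp (-(2 * Real.pi * Complex.I * ((theta α β m n j : ℝ) : ℂ))) := by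
  rw [lam, fourier_coe_apply, fourier_coe_apply, ← Complex.exp_add, ← Complex.exp_add]
  congr 1
  simp only [theta]
  push_cast
  ring

lemma my_skew_eab (α β : ℝ) (m n j : ℤ) (p : T2) :
    eab (m + j*n) n (skew α β p) = lam α β m n j * eab (m + (j+1)*n) n p := by
  simp only [eab, skew, lam]
  rw [my_fourier_pt_add, my_fourier_pt_add, my_fourier_pt_add]
  have hsplit : (fourier (m + (j+1)*n) p.1 : ℂ) = fourier (m + j*n) p.1 * fourier n p.1 := by
    have h : (m + (j+1)*n) = (m + j*n) + n := by ring
    rw [h]; exact fourier_add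
  rw [hsplit]
  ring

lemma my_funOf_skew (α β : ℝ) (m n : ℤ) (c : ℤ → ℂ) (p : T2) :
    funOf m n c (skew α β p) = funOf m n (fun j => c (j-1) * lam α β m n (j-1)) p := by
  unfold funOf
  calc ∑' j : ℤ, c j * eab (m + j*n) n (skew α β p)
      = ∑' j : ℤ, (fun k : ℤ => c (k-1) * lam α β m n (k-1) * eab (m + k*n) n p)
          ((Equiv.addRight (1:ℤ)) j) := by
        congr 1; funext j
        simp only [Equiv.coe_addRight, add_sub_cancel_right]
        rw [my_skew_eab]; ring
    _ = ∑' k : ℤ, c (k-1) * lam α β m n (k-1) * eab (m + k*n) n p :=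
        (Equiv.addRight (1:ℤ)).tsum_eq
          (fun k : ℤ => c (k-1) * lam α β m n (k-1) * eab (m + k*n) n p)

lemma my_Dmn_shift (α β : ℝ) (m n : ℤ) (c : ℤ → ℂ) :
    Dmn α β m n (fun j => c (j-1) * lam α β m n (j-1)) = Dmn α β m n c := by
  unfold Dmn
  calc ∑' j : ℤ, c (j-1) * lam α β m n (j-1)
        * Complex.exp (-(2 * Real.pi * Complex.I * ((theta α β m n j : ℝ) : ℂ)))
      = ∑' j : ℤ, (fun k : ℤ => c k
          * Complex.exp (-(2 * Real.pi * Complex.I * ((theta α β m n k : ℝ) : ℂ))))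
          ((Equiv.subRight (1:ℤ)) j) := by
        congr 1; funext j
        simp only [Equiv.subRight_apply]
        rw [← my_phase α β m n (j-1)]
        rw [sub_add_cancel]
        ring
    _ = _ := (Equiv.subRight (1:ℤ)).tsum_eq
          (fun k : ℤ => c k * Complex.exp (-(2 * Real.pi * Complex.I * ((theta α β m n k : ℝ) : ℂ))))

lemma my_norm_exp_theta (r : ℝ) : ‖Complex.exp (-(2 * Real.pi * Complex.I * (r : ℂ)))‖ = 1 := by
  simp [Complex.norm_exp]

lemma my_funOf_basepoint (m n : ℤ) (c : ℤ → ℂ) (x : T1) :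
    funOf m n c (x, 0) = ∑' j : ℤ, c j * fourier (m + j*n) x := by
  unfold funOf
  congr 1; funext j
  simp [eab, fourier_eval_zero]

lemma my_summable_shift {c : ℤ → ℂ} (h : Summable fun j : ℤ => ‖c j‖) (α β : ℝ) (m n : ℤ) :
    Summable fun j : ℤ => ‖c (j-1) * lam α β m n (j-1)‖ := by
  have heq : (fun j : ℤ => ‖c (j-1) * lam α β m n (j-1)‖) = fun j : ℤ => ‖c (j-1)‖ := by
    funext j; rw [norm_mul, my_norm_lam, mul_one]
  rw [heq]
  exact h.comp_injective (Equiv.subRight (1:ℤ)).injective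

lemma my_summable_mul_fourier {c : ℤ → ℂ} (h : Summable fun j : ℤ => ‖c j‖)
    (m n : ℤ) (x : T1) : Summable fun j : ℤ => c j * fourier (m + j*n) x := by
  apply Summable.of_norm
  have heq : (fun j : ℤ => ‖c j * fourier (m + j*n) x‖) = fun j : ℤ => ‖c j‖ := by
    funext j; rw [norm_mul, my_norm_fourier, mul_one]
  rw [heq]; exact h

lemma my_summable_Dmn_term {c : ℤ → ℂ} (h : Summable fun j : ℤ => ‖c j‖) (α β : ℝ) (m n : ℤ) :
    Summable fun j : ℤ =>
      c j * Complex.exp (-(2 * Real.pi * Complex.I * ((theta α β m n j : ℝ) : ℂ))) := by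
  apply Summable.of_norm
  have heq : (fun j : ℤ =>
      ‖c j * Complex.exp (-(2 * Real.pi * Complex.I * ((theta α β m n j : ℝ) : ℂ)))‖)
      = fun j : ℤ => ‖c j‖ := by
    funext j; rw [norm_mul, my_norm_exp_theta, mul_one]
  rw [heq]; exact h

lemma my_invariance (α β : ℝ) (m n : ℤ) (hn : n ≠ 0) {s : ℝ} (hs : 1/2 < s)
    (Ψc Ψc' : ℤ → ℂ) (h : SobSeq m n s Ψc) (h' : SobSeq m n s Ψc')
    (hfun : ∀ p : T2, funOf m n Ψc' p = funOf m n Ψc (skew α β p)) :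
    Dmn α β m n Ψc' = Dmn α β m n Ψc := by
  have hΨn := my_sob_summable_norm hn hs h
  have hdn : Summable fun j : ℤ => ‖Ψc (j-1) * lam α β m n (j-1)‖ :=
    my_summable_shift hΨn α β m n
  have h'n := my_sob_summable_norm hn hs h'
  have hext : Ψc' = fun j => Ψc (j-1) * lam α β m n (j-1) := by
    apply my_coeff_ext m n hn h'n hdn
    intro x
    have h1 := hfun (x, 0)
    rw [my_funOf_skew, my_funOf_basepoint, my_funOf_basepoint] at h1
    exact h1
  rw [hext]
  exact my_Dmn_shift α β m n Ψc

/-- `D_{(m,n)}` is `f`-invariant, and vanishes on coboundaries.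
For `s > 1/2`: if `Ψ' = Ψ∘f` (as functions in `W^s(H_{(m,n)})`, given by coefficient
sequences), then `D_{(m,n)}(Ψ') = D_{(m,n)}(Ψ)`; consequently if `Φ = u∘f − u` with
`u ∈ W^s(H_{(m,n)})`, then `D_{(m,n)}(Φ) = 0`. -/
theorem stmt8 (α β : ℝ) (hα : Irrational α) (m n : ℤ) (hn : n ≠ 0)
    (s : ℝ) (hs : 1 / 2 < s) :
    (∀ Ψc Ψc' : ℤ → ℂ, SobSeq m n s Ψc → SobSeq m n s Ψc' →
      (∀ p : T2, funOf m n Ψc' p = funOf m n Ψc (skew α β p)) →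
      Dmn α β m n Ψc' = Dmn α β m n Ψc) ∧
    ∀ Φc uc : ℤ → ℂ, SobSeq m n s Φc → SobSeq m n s uc →
      (∀ p : T2, funOf m n Φc p = funOf m n uc (skew α β p) - funOf m n uc p) →
      Dmn α β m n Φc = 0 := by
  constructor
  · intro Ψc Ψc' h h' hfun
    exact my_invariance α β m n hn hs Ψc Ψc' h h' hfun
  · intro Φc uc hΦ hu hfun
    have hucn := my_sob_summable_norm hn hs hu
    have hΦn := my_sob_summable_norm hn hs hΦ
    set d : ℤ → ℂ := fun j => uc (j-1) * lam α β m n (j-1) with hd_def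
    have hdn : Summable fun j : ℤ => ‖d j‖ := my_summable_shift hucn α β m n
    have hsubn : Summable fun j : ℤ => ‖d j - uc j‖ :=
      Summable.of_nonneg_of_le (fun j => norm_nonneg _)
        (fun j => norm_sub_le _ _) (hdn.add hucn)
    have hext : Φc = fun j => d j - uc j := by
      apply my_coeff_ext m n hn hΦn hsubn
      intro x
      have h1 := hfun (x, 0)
      rw [my_funOf_skew, my_funOf_basepoint, my_funOf_basepoint, my_funOf_basepoint] at h1
      rw [h1]
      rw [← Summable.tsum_sub (my_summable_mul_fourier hdn m n x)
        (my_summable_mul_fourier hucn m n x)]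
      congr 1; funext j; ring
    rw [hext]
    have hlin : Dmn α β m n (fun j => d j - uc j) = Dmn α β m n d - Dmn α β m n uc := by
      unfold Dmn
      rw [← Summable.tsum_sub (my_summable_Dmn_term hdn α β m n)
        (my_summable_Dmn_term hucn α β m n)]
      congr 1; funext j; ring
    rw [hlin, hd_def, my_Dmn_shift, sub_self]
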